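/- Let C be a symmetric monoidal category with braiding β, equipped for every object X with morphisms δ_X : X ⟶ X ⊗ X and ε_X : X ⟶ 𝟙 forming a cocommutative comonoid (coassociative; counital: δ_X ≫ (ε_X ▷ X) ≫ λ_X = 𝟙_X = δ_X ≫ (X ◁ ε_Y) ≫ ρ_X; and δ_X ≫ β_{X,X} = δ_X), such that δ and ε are natural in X (f ≫ δ_Y = δ_X ≫ (f ⊗ f) and f ≫ ε_Y = ε_X for every f : X ⟶ Y) and coherent with the tensor: ε_𝟙 = 𝟙_𝟙, δ_𝟙 = λ_𝟙⁻¹, ε_{X⊗Y} = (ε_X ⊗ ε_Y) ≫ λ_𝟙, and δ_{X⊗Y} = (δ_X ⊗ δ_Y) ≫ (X ◁ β_{X,Y} ▷ Y) modulo associators. Then every tensor X ⊗ Y is a categorical product of X and Y: with projections π₁ = (X ◁ ε_Y) ≫ ρ_X and π₂ = (ε_X ▷ Y) ≫ λ_Y, the map h ↦ (h ≫ π₁, h ≫ π₂) is a bijection Hom(Z, X ⊗ Y) ≅ Hom(Z, X) × Hom(Z, Y) for every object Z, with inverse (f, g) ↦ δ_Z ≫ (f ⊗ g). (Coherent natural commutative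 comonoids make a symmetric monoidal category cartesian.) -/

import Mathlib

open CategoryTheory MonoidalCategory

private lemma tensorμ_proj {C : Type*} [Category C] [MonoidalCategory C] [SymmetricCategory C]
    (X X' Y Y' : C) (e : X' ⟶ 𝟙_ C) (f : Y' ⟶ 𝟙_ C) :
    tensorμ X X' Y' Y ≫ (((X ◁ f) ≫ (ρ_ X).hom) ⊗ₘ ((e ▷ Y) ≫ (λ_ Y).hom)) =
      ((X ◁ e) ≫ (ρ_ X).hom) ⊗ₘ ((f ▷ Y) ≫ (λ_ Y).hom) := by
  have key : (β_ X' Y').hom ≫ (f ▷ X') ≫ (λ_ X').hom = (X' ◁ f) ≫ (ρ_ X').hom := by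
    rw [← BraidedCategory.braiding_naturality_right_assoc, braiding_tensorUnit_right]
    simp
  simp only [tensorμ, MonoidalCategory.tensorHom_def, whisker_exchange]
  simp [whisker_exchange]
  simp only [← MonoidalCategory.whiskerLeft_comp]
  congr 1
  rw [cancel_epi]
  calc (β_ X' Y').hom ▷ Y ≫ f ▷ X' ▷ Y ≫ (α_ (𝟙_ C) X' Y).hom ≫ (λ_ (X' ⊗ Y)).hom ≫ e ▷ Y ≫ (λ_ Y).hom
      = ((β_ X' Y').hom ≫ (f ▷ X') ≫ (λ_ X').hom) ▷ Y ≫ e ▷ Y ≫ (λ_ Y).hom := by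
        rw [leftUnitor_tensor_hom]; simp only [Category.assoc, Iso.hom_inv_id_assoc]
        simp only [MonoidalCategory.comp_whiskerRight, Category.assoc]
    _ = ((X' ◁ f) ≫ (ρ_ X').hom) ▷ Y ≫ e ▷ Y ≫ (λ_ Y).hom := by rw [key]
    _ = e ▷ Y' ▷ Y ≫ (α_ (𝟙_ C) Y' Y).hom ≫ (λ_ (Y' ⊗ Y)).hom ≫ f ▷ Y ≫ (λ_ Y).hom := by
        rw [leftUnitor_tensor_hom]; simp only [Category.assoc, Iso.hom_inv_id_assoc]
        have h2 : (X' ◁ f) ≫ (ρ_ X').hom ≫ e = (e ▷ Y') ≫ (λ_ Y').hom ≫ f := by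
          rw [← rightUnitor_naturality, ← leftUnitor_naturality, whisker_exchange_assoc,
            unitors_equal]
        calc (X' ◁ f ≫ (ρ_ X').hom) ▷ Y ≫ e ▷ Y ≫ (λ_ Y).hom
            = ((X' ◁ f ≫ (ρ_ X').hom ≫ e) ▷ Y) ≫ (λ_ Y).hom := by
              simp only [MonoidalCategory.comp_whiskerRight, Category.assoc]
          _ = ((e ▷ Y' ≫ (λ_ Y').hom ≫ f) ▷ Y) ≫ (λ_ Y).hom := by rw [h2]
          _ = e ▷ Y' ▷ Y ≫ (λ_ Y').hom ▷ Y ≫ f ▷ Y ≫ (λ_ Y).hom := by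
              simp only [MonoidalCategory.comp_whiskerRight, Category.assoc]

/-- Coherent natural commutative comonoids make a symmetric monoidal category cartesian:
with projections `π₁ = (X ◁ ε Y) ≫ ρ_X` and `π₂ = (ε X ▷ Y) ≫ λ_Y`, the map
`h ↦ (h ≫ π₁, h ≫ π₂)` is a bijection `Hom(Z, X ⊗ Y) ≅ Hom(Z, X) × Hom(Z, Y)` with
inverse `(f, g) ↦ δ_Z ≫ (f ⊗ g)`. -/
theorem stmt_1 {C : Type*} [Category C] [MonoidalCategory C] [SymmetricCategory C]
    (δ : ∀ X : C, X ⟶ X ⊗ X) (ε : ∀ X : C, X ⟶ 𝟙_ C)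
    (coassoc : ∀ X : C, δ X ≫ (δ X ▷ X) ≫ (α_ X X X).hom = δ X ≫ (X ◁ δ X))
    (counit_left : ∀ X : C, δ X ≫ (ε X ▷ X) ≫ (λ_ X).hom = 𝟙 X)
    (counit_right : ∀ X : C, δ X ≫ (X ◁ ε X) ≫ (ρ_ X).hom = 𝟙 X)
    (cocomm : ∀ X : C, δ X ≫ (β_ X X).hom = δ X)
    (δ_nat : ∀ {X Y : C} (f : X ⟶ Y), f ≫ δ Y = δ X ≫ (f ⊗ₘ f))
    (ε_nat : ∀ {X Y : C} (f : X ⟶ Y), f ≫ ε Y = ε X)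
    (ε_unit : ε (𝟙_ C) = 𝟙 (𝟙_ C))
    (δ_unit : δ (𝟙_ C) = (λ_ (𝟙_ C)).inv)
    (ε_tensor : ∀ X Y : C, ε (X ⊗ Y) = (ε X ⊗ₘ ε Y) ≫ (λ_ (𝟙_ C)).hom)
    (δ_tensor : ∀ X Y : C, δ (X ⊗ Y) = (δ X ⊗ₘ δ Y) ≫ tensorμ X X Y Y) :
    ∀ X Y Z : C,
      (∀ (f : Z ⟶ X) (g : Z ⟶ Y),
        (δ Z ≫ (f ⊗ₘ g)) ≫ (X ◁ ε Y) ≫ (ρ_ X).hom = f ∧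
        (δ Z ≫ (f ⊗ₘ g)) ≫ (ε X ▷ Y) ≫ (λ_ Y).hom = g) ∧
      (∀ h : Z ⟶ X ⊗ Y,
        δ Z ≫ ((h ≫ (X ◁ ε Y) ≫ (ρ_ X).hom) ⊗ₘ (h ≫ (ε X ▷ Y) ≫ (λ_ Y).hom)) = h) := by
  intro X Y Z
  constructor
  · intro f g
    constructor
    · rw [MonoidalCategory.tensorHom_def, Category.assoc, Category.assoc,
        ← MonoidalCategory.whiskerLeft_comp_assoc, ε_nat g, ← whisker_exchange_assoc,
        rightUnitor_naturality, reassoc_of% counit_right Z]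
    · rw [tensorHom_def', Category.assoc, Category.assoc,
        ← MonoidalCategory.comp_whiskerRight_assoc, ε_nat f, whisker_exchange_assoc,
        leftUnitor_naturality, reassoc_of% counit_left Z]
  · intro h
    have hδ : δ (X ⊗ Y) ≫ (((X ◁ ε Y) ≫ (ρ_ X).hom) ⊗ₘ ((ε X ▷ Y) ≫ (λ_ Y).hom)) = 𝟙 (X ⊗ Y) := by
      rw [δ_tensor, Category.assoc, tensorμ_proj X X Y Y (ε X) (ε Y), tensorHom_comp_tensorHom,
        ← Category.assoc, ← Category.assoc]
      rw [Category.assoc (δ X), Category.assoc (δ Y), counit_right X, counit_left Y,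
        id_tensorHom_id]
    calc δ Z ≫ ((h ≫ (X ◁ ε Y) ≫ (ρ_ X).hom) ⊗ₘ (h ≫ (ε X ▷ Y) ≫ (λ_ Y).hom))
        = δ Z ≫ (h ⊗ₘ h) ≫ (((X ◁ ε Y) ≫ (ρ_ X).hom) ⊗ₘ ((ε X ▷ Y) ≫ (λ_ Y).hom)) := by
          rw [tensorHom_comp_tensorHom]
      _ = h ≫ δ (X ⊗ Y) ≫ (((X ◁ ε Y) ≫ (ρ_ X).hom) ⊗ₘ ((ε X ▷ Y) ≫ (λ_ Y).hom)) := by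
          rw [← Category.assoc, ← δ_nat h, Category.assoc]
      _ = h := by rw [hδ, Category.comp_id]
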